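/- If X₁,…,Xₙ are identically distributed integrable random variables and λ₁,…,λₙ are nonnegative weights summing to 1, then the convex combination Σᵢ λᵢ Xᵢ is smaller than X_j in convex order, for every j. -/

import Mathlib

open MeasureTheory ProbabilityTheory Set

/-- A convex combination of identically distributed integrable random variables is smaller
in convex order than each of them. -/
theorem stmt_2 {Ω : Type*} [MeasurableSpace Ω] (P : Measure Ω) [IsProbabilityMeasure P]
    (n : ℕ) (X : Fin n → Ω → ℝ) (hint : ∀ i, Integrable (X i) P)
    (hid : ∀ i j, IdentDistrib (X i) (X j) P P)
    (lam : Fin n → ℝ) (hlam : ∀ i, 0 ≤ lam i) (hsum : (∑ i, lam i) = 1)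
    (j : Fin n) :
    ∀ φ : ℝ → ℝ, ConvexOn ℝ univ φ →
      Integrable (fun ω => φ (∑ i, lam i * X i ω)) P →
      Integrable (fun ω => φ (X j ω)) P →
      ∫ ω, φ (∑ i, lam i * X i ω) ∂P ≤ ∫ ω, φ (X j ω) ∂P := by
  intro φ hφ hint1 hint2
  have hφc : Continuous φ := by
    have := hφ.continuousOn isOpen_univ
    rw [← continuousOn_univ]; exact this
  have hmeas : Measurable φ := hφc.measurable
  have hInt : ∀ i, Integrable (fun ω => φ (X i ω)) P := fun i =>
    (((hid i j).comp hmeas).integrable_iff).mpr hint2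
  have key : ∀ ω, φ (∑ i, lam i * X i ω) ≤ ∑ i, lam i * φ (X i ω) := fun ω => by
    have := hφ.map_sum_le (t := Finset.univ) (w := lam) (p := fun i => X i ω)
      (fun i _ => hlam i) hsum (fun i _ => mem_univ _)
    simpa [smul_eq_mul] using this
  calc ∫ ω, φ (∑ i, lam i * X i ω) ∂P
      ≤ ∫ ω, ∑ i, lam i * φ (X i ω) ∂P :=
        integral_mono hint1 (integrable_finset_sum _ fun i _ => (hInt i).const_mul _) key
    _ = ∑ i, lam i * ∫ ω, φ (X i ω) ∂P := by
        rw [integral_finset_sum _ fun i _ => (hInt i).const_mul _]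
        simp [integral_const_mul]
    _ = ∑ i, lam i * ∫ ω, φ (X j ω) ∂P := by
        refine Finset.sum_congr rfl fun i _ => ?_
        exact congrArg _ (((hid i j).comp hmeas).integral_eq)
    _ = ∫ ω, φ (X j ω) ∂P := by rw [← Finset.sum_mul, hsum, one_mul]
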